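/- Let A and B be 0,1 matrices, and suppose there exist sequences of 0,1 matrices M_1,...,M_s and N_1,...,N_s such that the Boolean sum of M_1,...,M_s equals A, and for every (i,j) with A_{i,j}=1, the Boolean sum of the matrices N_t over those t with (M_t)_{i,j}=1 equals B. Then Rbool(A⊗B) ≤ Σ_{t=1}^{s} Rbool(M_t)·Rbool(N_t). -/
import Mathlib


open Function Set

section Defs

variable {α β : Type*}

/-- A `0,1` matrix with integer entries. -/
def ZeroOne (M : Matrix α β ℤ) : Prop := ∀ i j, M i j = 0 ∨ M i j = 1

/-- A monochromatic all-ones combinatorial rectangle of `M`. -/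
def IsOnesRect (M : Matrix α β ℤ) (S : Set (α × β)) : Prop :=
  (∃ (R : Set α) (C : Set β), S = R ×ˢ C) ∧ ∀ p ∈ S, M p.1 p.2 = 1

/-- The set of `1`-entries of `M`. -/
def onesOf (M : Matrix α β ℤ) : Set (α × β) := {p | M p.1 p.2 = 1}

/-- Minimum number of monochromatic all-ones rectangles covering the ones of `M`. -/
noncomputable def coverNum (M : Matrix α β ℤ) : ℕ :=
  sInf {k | ∃ f : Fin k → Set (α × β), (∀ t, IsOnesRect M (f t)) ∧ (⋃ t, f t) = onesOf M}

/-- Minimum number of pairwise disjoint monochromatic all-ones rectangles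
partitioning the ones of `M`. -/
noncomputable def partitionNum (M : Matrix α β ℤ) : ℕ :=
  sInf {k | ∃ f : Fin k → Set (α × β), (∀ t, IsOnesRect M (f t)) ∧
    (Pairwise fun s t => Disjoint (f s) (f t)) ∧ (⋃ t, f t) = onesOf M}

end Defs


lemma coverSet_nonempty {n m : ℕ} (M : Matrix (Fin n) (Fin m) ℤ) :
    {k | ∃ f : Fin k → Set (Fin n × Fin m), (∀ t, IsOnesRect M (f t)) ∧
      (⋃ t, f t) = onesOf M}.Nonempty := by
  classical
  refine ⟨n * m, fun e =>
    if M (finProdFinEquiv.symm e).1 (finProdFinEquiv.symm e).2 = 1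
    then ({(finProdFinEquiv.symm e).1} : Set (Fin n)) ×ˢ {(finProdFinEquiv.symm e).2}
    else ∅, ?_, ?_⟩
  · intro t
    by_cases h : M (finProdFinEquiv.symm t).1 (finProdFinEquiv.symm t).2 = 1
    · refine ⟨⟨{(finProdFinEquiv.symm t).1}, {(finProdFinEquiv.symm t).2}, by simp only [if_pos h]⟩, ?_⟩
      intro x hx
      simp only [if_pos h] at hx
      obtain ⟨hx1, hx2⟩ := hx
      simp only [Set.mem_singleton_iff] at hx1 hx2
      rw [hx1, hx2]; exact h
    · refine ⟨⟨∅, ∅, by simp only [if_neg h]; simp⟩, ?_⟩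
      intro x hx
      simp only [if_neg h] at hx
      exact absurd hx (Set.notMem_empty x)
  · ext x
    simp only [Set.mem_iUnion, onesOf, Set.mem_setOf_eq]
    constructor
    · rintro ⟨e, he⟩
      by_cases h : M (finProdFinEquiv.symm e).1 (finProdFinEquiv.symm e).2 = 1
      · simp only [if_pos h] at he
        obtain ⟨hx1, hx2⟩ := he
        simp only [Set.mem_singleton_iff] at hx1 hx2
        rw [hx1, hx2]; exact h
      · simp only [if_neg h] at he; exact absurd he (Set.notMem_empty x)
    · intro h
      refine ⟨finProdFinEquiv x, ?_⟩
      simp only [Equiv.symm_apply_apply, if_pos (show M x.1 x.2 = 1 from h)]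
      simp

open Kronecker in
/-- Suppose the Boolean sum of `0,1` matrices `Ms 1, ..., Ms s` equals `A`, and for
every `(i,j)` with `A i j = 1`, the Boolean sum of the matrices `Ns t` over those
`t` with `(Ms t) i j = 1` equals `B`. Then
`Rbool(A ⊗ B) ≤ Σ_t Rbool(Ms t) · Rbool(Ns t)`. -/
theorem boolRank_kronecker_cover_bound {n m p q s : ℕ}
    (A : Matrix (Fin n) (Fin m) ℤ) (B : Matrix (Fin p) (Fin q) ℤ)
    (hA : ZeroOne A) (hB : ZeroOne B)
    (Ms : Fin s → Matrix (Fin n) (Fin m) ℤ) (Ns : Fin s → Matrix (Fin p) (Fin q) ℤ)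
    (hMs : ∀ t, ZeroOne (Ms t)) (hNs : ∀ t, ZeroOne (Ns t))
    (hsum : ∀ i j, A i j = 1 ↔ ∃ t, Ms t i j = 1)
    (hcov : ∀ i j, A i j = 1 → ∀ k l, B k l = 1 ↔ ∃ t, Ms t i j = 1 ∧ Ns t k l = 1) :
    coverNum (A ⊗ₖ B) ≤ ∑ t, coverNum (Ms t) * coverNum (Ns t) := by
  classical
  choose F hF hFU using fun t => Nat.sInf_mem (coverSet_nonempty (Ms t))
  choose G hG hGU using fun t => Nat.sInf_mem (coverSet_nonempty (Ns t))
  have hcard : Fintype.card (Σ t : Fin s, Fin (coverNum (Ms t)) × Fin (coverNum (Ns t)))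
      = ∑ t, coverNum (Ms t) * coverNum (Ns t) := by simp
  let e : Fin (∑ t, coverNum (Ms t) * coverNum (Ns t)) ≃
      (Σ t : Fin s, Fin (coverNum (Ms t)) × Fin (coverNum (Ns t))) :=
    (Fintype.equivFinOfCardEq hcard).symm
  let g : (Σ t : Fin s, Fin (coverNum (Ms t)) × Fin (coverNum (Ns t))) →
      Set ((Fin n × Fin p) × (Fin m × Fin q)) :=
    fun w => {x | (x.1.1, x.2.1) ∈ F w.1 w.2.1 ∧ (x.1.2, x.2.2) ∈ G w.1 w.2.2}
  -- key fact: membership in g implies entry 1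
  have hone : ∀ w x, x ∈ g w → (A ⊗ₖ B) x.1 x.2 = 1 := by
    rintro ⟨t, a, b⟩ ⟨⟨i, k⟩, ⟨j, l⟩⟩ ⟨h1, h2⟩
    have hM : Ms t i j = 1 := (hF t a).2 _ h1
    have hN : Ns t k l = 1 := (hG t b).2 _ h2
    have hAij : A i j = 1 := (hsum i j).mpr ⟨t, hM⟩
    have hBkl : B k l = 1 := (hcov i j hAij k l).mpr ⟨t, hM, hN⟩
    simp [Matrix.kroneckerMap_apply, hAij, hBkl]
  apply Nat.sInf_le
  have hrect : ∀ w, IsOnesRect (A ⊗ₖ B) (g w) := by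
    rintro ⟨t, a, b⟩
    obtain ⟨⟨R, C, hRC⟩, _⟩ := hF t a
    obtain ⟨⟨R', C', hRC'⟩, _⟩ := hG t b
    refine ⟨⟨R ×ˢ R', C ×ˢ C', ?_⟩, fun x hx => hone _ x hx⟩
    ext ⟨⟨i, k⟩, ⟨j, l⟩⟩
    simp only [g, Set.mem_setOf_eq, hRC, hRC', Set.mem_prod]
    tauto
  refine ⟨fun k => g (e k), fun u => hrect (e u), ?_⟩
  · rw [(e.surjective).iUnion_comp (g := g)]
    ext ⟨⟨i, k⟩, ⟨j, l⟩⟩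
    simp only [Set.mem_iUnion, onesOf, Set.mem_setOf_eq]
    constructor
    · rintro ⟨w, hw⟩
      exact hone w _ hw
    · intro h
      simp only [Matrix.kroneckerMap_apply] at h
      have hAij : A i j = 1 := by
        rcases hA i j with h0 | h1
        · rw [h0, zero_mul] at h; exact absurd h (by norm_num)
        · exact h1
      have hBkl : B k l = 1 := by
        rcases hB k l with h0 | h1
        · rw [h0, mul_zero] at h; exact absurd h (by norm_num)
        · exact h1
      obtain ⟨t, hM, hN⟩ := (hcov i j hAij k l).mp hBkl
      have hij : (i, j) ∈ ⋃ a, F t a := by rw [hFU t]; exact hM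
      have hkl : (k, l) ∈ ⋃ b, G t b := by rw [hGU t]; exact hN
      obtain ⟨a, ha⟩ := Set.mem_iUnion.mp hij
      obtain ⟨b, hb⟩ := Set.mem_iUnion.mp hkl
      exact ⟨⟨t, a, b⟩, ha, hb⟩
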